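/- Fix X-subsets S₁*, …, S_m* of a Y-element pool and let S_w be an independent uniformly random X-subset. Then P[S_w ∩ (⋃_{i=1}^m S_i*) = ∅] = C(Y - |⋃_{i=1}^m S_i*|, X)/C(Y, X), and this is at most exp(-(q/X)·|⋃_{i=1}^m S_i*|), where q = 1 - C(Y-X,X)/C(Y,X), assuming Y ≥ 2X. -/

import Mathlib

open Finset

open scoped Classical in
lemma disj_count (Y X : ℕ) (A : Finset (Fin Y)) :
    (((Finset.powersetCard X (Finset.univ : Finset (Fin Y)))).filter
      (fun T => T ∩ A = ∅)).card = (Y - A.card).choose X := by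
  have h : ((Finset.powersetCard X (Finset.univ : Finset (Fin Y))).filter
      (fun T => T ∩ A = ∅)) = Finset.powersetCard X Aᶜ := by
    ext T
    simp only [Finset.mem_filter, Finset.mem_powersetCard, Finset.subset_univ, true_and,
      ← Finset.disjoint_iff_inter_eq_empty]
    rw [← le_compl_iff_disjoint_right]
    tauto
  rw [h, Finset.card_powersetCard, Finset.card_compl, Fintype.card_fin]

lemma choose_id (n X : ℕ) (h : X ≤ n) :
    (n + 1) * n.choose X = (n + 1 - X) * (n + 1).choose X := by
  have h1 := Nat.add_one_mul_choose_eq n (n - X)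
  rw [Nat.choose_symm h] at h1
  have h2 : n - X + 1 = n + 1 - X := by omega
  rw [h2] at h1
  rw [Nat.choose_symm (by omega : X ≤ n + 1)] at h1
  rw [h1]; ring

lemma pb (X : ℕ) : ∀ (s n Y : ℕ), Y = n + s → X ≤ n →
    n.choose X * Y ^ s ≤ Y.choose X * (Y - X) ^ s := by
  intro s
  induction s with
  | zero => intro n Y hY hX; simp [hY]
  | succ s ih =>
    intro n Y hY hX
    have key : n.choose X * Y ≤ (n + 1).choose X * (Y - X) := by
      have hid := choose_id n X hX
      have hmul : (n + 1) * (n.choose X * Y) ≤ (n + 1) * ((n + 1).choose X * (Y - X)) := by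
        calc (n + 1) * (n.choose X * Y) = ((n + 1) * n.choose X) * Y := by ring
        _ = ((n + 1 - X) * (n + 1).choose X) * Y := by rw [hid]
        _ ≤ ((Y - X) * (n + 1).choose X) * (n + 1) := by
            obtain ⟨a, ha⟩ : ∃ a, n + 1 = X + a := ⟨n + 1 - X, by omega⟩
            have hnx : n + 1 - X = a := by omega
            have hYX : Y - X = a + s := by omega
            have hY' : Y = X + a + s := by omega
            rw [hnx, hYX, hY', ha]
            calc a * (X + a).choose X * (X + a + s)
                = (a * (X + a + s)) * (X + a).choose X := by ring
              _ ≤ ((a + s) * (X + a)) * (X + a).choose X :=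
                  Nat.mul_le_mul_right _ (by nlinarith)
              _ = (a + s) * (X + a).choose X * (X + a) := by ring
        _ = (n + 1) * ((n + 1).choose X * (Y - X)) := by ring
      exact Nat.le_of_mul_le_mul_left hmul (by omega)
    calc n.choose X * Y ^ (s + 1) = (n.choose X * Y) * Y ^ s := by ring
    _ ≤ ((n + 1).choose X * (Y - X)) * Y ^ s := Nat.mul_le_mul_right _ key
    _ = ((n + 1).choose X * Y ^ s) * (Y - X) := by ring
    _ ≤ (Y.choose X * (Y - X) ^ s) * (Y - X) :=
        Nat.mul_le_mul_right _ (ih (n + 1) Y (by omega) (by omega))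
    _ = Y.choose X * (Y - X) ^ (s + 1) := by ring

open scoped Classical in
lemma key_nat (X Y : ℕ) (hY : 2 * X ≤ Y) :
    Y * (Y.choose X - (Y - X).choose X) ≤ X * X * Y.choose X := by
  rcases Nat.eq_zero_or_pos X with hX | hX
  · simp [hX]
  have hXY : X ≤ Y := by omega
  set Ω := Finset.powersetCard X (Finset.univ : Finset (Fin Y)) with hΩ
  have hΩcard : Ω.card = Y.choose X := by
    rw [hΩ, Finset.card_powersetCard, Finset.card_univ, Fintype.card_fin]
  obtain ⟨T0, -, hT0⟩ := Finset.exists_subset_card_eq (s := (Finset.univ : Finset (Fin Y))) (n := X)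
    (by simpa [Fintype.card_fin] using hXY)
  -- count of T disjoint from T0
  have hdisj : (Ω.filter (fun T => T ∩ T0 = ∅)).card = (Y - X).choose X := by
    rw [hΩ, disj_count, hT0]
  have htot := Finset.card_filter_add_card_filter_not
    (s := Ω) (p := fun T => T ∩ T0 = ∅)
  -- each y counts
  have hmem : ∀ y : Fin Y, (Ω.filter (fun T => y ∈ T)).card
      = Y.choose X - (Y - 1).choose X := by
    intro y
    have h1 : (Ω.filter (fun T => y ∉ T)).card = (Y - 1).choose X := by
      have : (Ω.filter (fun T => y ∉ T)) = (Ω.filter (fun T => T ∩ ({y} : Finset (Fin Y)) = ∅)) := by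
        apply Finset.filter_congr
        intro T _
        simp [Finset.eq_empty_iff_forall_notMem]
      rw [this, hΩ, disj_count, Finset.card_singleton]
    have h2 := Finset.card_filter_add_card_filter_not
      (s := Ω) (p := fun T => y ∈ T)
    have hle : (Y - 1).choose X ≤ Y.choose X := Nat.choose_le_choose X (by omega)
    omega
  have hsub : Ω.filter (fun T => ¬ (T ∩ T0 = ∅)) ⊆
      T0.biUnion (fun y => Ω.filter (fun T => y ∈ T)) := by
    intro T hT
    rw [Finset.mem_filter] at hT
    obtain ⟨hTΩ, hne⟩ := hT
    obtain ⟨y, hy⟩ := Finset.nonempty_iff_ne_empty.2 hne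
    rw [Finset.mem_inter] at hy
    exact Finset.mem_biUnion.2 ⟨y, hy.2, Finset.mem_filter.2 ⟨hTΩ, hy.1⟩⟩
  have hcount : (Ω.filter (fun T => ¬ (T ∩ T0 = ∅))).card
      ≤ X * (Y.choose X - (Y - 1).choose X) := by
    calc (Ω.filter (fun T => ¬ (T ∩ T0 = ∅))).card
        ≤ (T0.biUnion (fun y => Ω.filter (fun T => y ∈ T))).card := Finset.card_le_card hsub
      _ ≤ ∑ y ∈ T0, (Ω.filter (fun T => y ∈ T)).card := Finset.card_biUnion_le
      _ = X * (Y.choose X - (Y - 1).choose X) := by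
          rw [Finset.sum_congr rfl (fun y _ => hmem y), Finset.sum_const, hT0, smul_eq_mul]
  have hle' : (Y - X).choose X ≤ Y.choose X := Nat.choose_le_choose X (by omega)
  have hmain : Y.choose X - (Y - X).choose X ≤ X * (Y.choose X - (Y - 1).choose X) := by
    omega
  -- Pascal + identity
  obtain ⟨y1, hy1⟩ : ∃ y1, Y = y1 + 1 := ⟨Y - 1, by omega⟩
  obtain ⟨x1, hx1⟩ : ∃ x1, X = x1 + 1 := ⟨X - 1, by omega⟩
  have hpascal : Y.choose X = (Y - 1).choose X + (Y - 1).choose (X - 1) := by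
    rw [hy1, hx1]; simp [Nat.choose_succ_succ]; omega
  have hident : Y * (Y - 1).choose (X - 1) = X * Y.choose X := by
    have := Nat.add_one_mul_choose_eq y1 x1
    rw [hy1, hx1]
    rw [Nat.add_sub_cancel, Nat.add_sub_cancel, this]; ring
  calc Y * (Y.choose X - (Y - X).choose X)
      ≤ Y * (X * (Y.choose X - (Y - 1).choose X)) := Nat.mul_le_mul_left _ hmain
    _ = X * (Y * (Y - 1).choose (X - 1)) := by
          have hdiff : Y.choose X - (Y - 1).choose X = (Y - 1).choose (X - 1) := by omega
          rw [hdiff]; ring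
    _ = X * (X * Y.choose X) := by rw [hident]
    _ = X * X * Y.choose X := by ring

open scoped Classical in
/-- For fixed `X`-subsets with union `A` (with `|A| ≤ Y - X`) and uniform random
`X`-subset `S_w`: `P[S_w ∩ A = ∅] = C(Y-|A|,X)/C(Y,X) ≤ exp(-(q/X)·|A|)`. -/
theorem stmt6 (X Y m : ℕ) (hY : 2 * X ≤ Y) (hm : 1 ≤ m)
    (S : Fin m → Finset (Fin Y)) (hS : ∀ i, (S i).card = X)
    (hA : (Finset.univ.biUnion S).card ≤ Y - X) :
    let Ω := Finset.powersetCard X (Finset.univ : Finset (Fin Y))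
    let A := Finset.univ.biUnion S
    let q : ℝ := 1 - ((Y - X).choose X : ℝ) / (Y.choose X : ℝ)
    ((Ω.filter (fun T => T ∩ A = ∅)).card : ℝ) / (Ω.card : ℝ)
        = ((Y - A.card).choose X : ℝ) / (Y.choose X : ℝ) ∧
    ((Ω.filter (fun T => T ∩ A = ∅)).card : ℝ) / (Ω.card : ℝ)
        ≤ Real.exp (-(q / X) * A.card) := by
  intro Ω A q
  have hq : q = 1 - ((Y - X).choose X : ℝ) / (Y.choose X : ℝ) := rfl
  have hXY : X ≤ Y := by omega
  have hc : 0 < Y.choose X := Nat.choose_pos hXY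
  have hΩcard : Ω.card = Y.choose X := by
    rw [show Ω = Finset.powersetCard X (Finset.univ : Finset (Fin Y)) from rfl,
      Finset.card_powersetCard, Finset.card_univ, Fintype.card_fin]
  have hfilter : (Ω.filter (fun T => T ∩ A = ∅)).card = (Y - A.card).choose X :=
    disj_count Y X A
  have heq : ((Ω.filter (fun T => T ∩ A = ∅)).card : ℝ) / (Ω.card : ℝ)
      = ((Y - A.card).choose X : ℝ) / (Y.choose X : ℝ) := by
    rw [hfilter, hΩcard]
  refine ⟨heq, ?_⟩
  rw [heq]
  set s := A.card with hs
  rcases Nat.eq_zero_or_pos X with hX0 | hX0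
  · subst hX0
    rw [hq]
    norm_num [Nat.choose_zero_right]
  -- main case
  have hXR : (0 : ℝ) < X := by exact_mod_cast hX0
  have hYR : (0 : ℝ) < Y := by
    have : 0 < Y := by omega
    exact_mod_cast this
  have hcR : (0 : ℝ) < (Y.choose X : ℝ) := by exact_mod_cast hc
  have hsY : s + X ≤ Y := by
    have : s ≤ Y - X := hA
    omega
  have hnat : (Y - s).choose X * Y ^ s ≤ Y.choose X * (Y - X) ^ s :=
    pb X s (Y - s) Y (by omega) (by omega)
  have step1 : ((Y - s).choose X : ℝ) / (Y.choose X : ℝ)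
      ≤ (((Y - X : ℕ) : ℝ) / (Y : ℝ)) ^ s := by
    rw [div_pow, div_le_div_iff₀ hcR (pow_pos hYR s)]
    have hnat2 : (Y - s).choose X * Y ^ s ≤ (Y - X) ^ s * Y.choose X :=
      hnat.trans_eq (mul_comm _ _)
    exact_mod_cast hnat2
  have hcast : ((Y - X : ℕ) : ℝ) = (Y : ℝ) - X := by
    exact Nat.cast_sub hXY
  have step2 : (((Y - X : ℕ) : ℝ) / (Y : ℝ)) ^ s ≤ Real.exp (-((X : ℝ) / Y)) ^ s := by
    apply pow_le_pow_left₀ (div_nonneg (by positivity) hYR.le)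
    rw [hcast, sub_div, div_self hYR.ne']
    have h := Real.add_one_le_exp (-((X : ℝ) / Y))
    linarith
  have step3 : Real.exp (-((X : ℝ) / Y)) ^ s = Real.exp (-((X : ℝ) / Y) * s) := by
    rw [← Real.exp_nat_mul]; ring_nf
  have hqx : q / X ≤ (X : ℝ) / Y := by
    have hle' : (Y - X).choose X ≤ Y.choose X := Nat.choose_le_choose X (by omega)
    have hkeyR : (Y : ℝ) * ((Y.choose X : ℝ) - ((Y - X).choose X : ℝ))
        ≤ (X : ℝ) * X * Y.choose X := by
      have h := key_nat X Y hY
      have hcast2 : ((Y.choose X - (Y - X).choose X : ℕ) : ℝ)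
          = (Y.choose X : ℝ) - ((Y - X).choose X : ℝ) := by
        exact Nat.cast_sub hle'
      calc (Y : ℝ) * ((Y.choose X : ℝ) - ((Y - X).choose X : ℝ))
          = ((Y * (Y.choose X - (Y - X).choose X) : ℕ) : ℝ) := by
            rw [Nat.cast_mul, hcast2]
        _ ≤ ((X * X * Y.choose X : ℕ) : ℝ) := by exact_mod_cast h
        _ = (X : ℝ) * X * Y.choose X := by push_cast; ring
    have hq' : q = ((Y.choose X : ℝ) - ((Y - X).choose X : ℝ)) / (Y.choose X : ℝ) := by
      rw [hq]; field_simp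
    rw [hq', div_div, div_le_div_iff₀ (by positivity) hYR]
    nlinarith [hkeyR]
  have step4 : Real.exp (-((X : ℝ) / Y) * s) ≤ Real.exp (-(q / X) * s) := by
    apply Real.exp_le_exp.2
    have hs0 : (0 : ℝ) ≤ (s : ℝ) := Nat.cast_nonneg s
    nlinarith [hqx, hs0]
  calc ((Y - s).choose X : ℝ) / (Y.choose X : ℝ)
      ≤ (((Y - X : ℕ) : ℝ) / (Y : ℝ)) ^ s := step1
    _ ≤ Real.exp (-((X : ℝ) / Y)) ^ s := step2
    _ = Real.exp (-((X : ℝ) / Y) * s) := step3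
    _ ≤ Real.exp (-(q / X) * s) := step4
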